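/- Let 0 < α < 1 and λ ∈ ℝ. Suppose v : (0,1] → ℂ is twice continuously differentiable on (0,1], satisfies ∫₀¹ |v(x)|² dx < ∞ and ∫₀¹ x^α |v'(x)|² dx < ∞, solves (x^α v'(x))' = −λ v(x) for all x ∈ (0,1), and satisfies the boundary conditions lim_{x→0⁺} v(x) = 0, lim_{x→0⁺} x^α v'(x) = 0, and v'(1) = 0. Then v is identically zero on (0,1]. -/

import Mathlib

open MeasureTheory Set Complex Filter

/-- No eigenvalues on the imaginary axis: if `v` is twice continuously
differentiable on `(0,1]`, lies in the weighted space (`∫₀¹|v|² < ∞`, `∫₀¹ xᵅ|v'|² < ∞`),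
solves the degenerate Sturm–Liouville equation `(xᵅ v')' = -λ v` on `(0,1)` and satisfies
`v(0⁺) = 0`, `(xᵅ v')(0⁺) = 0`, `v'(1) = 0`, then `v ≡ 0` on `(0,1]`. -/
theorem stmt7 (α lam : ℝ) (hα0 : 0 < α) (hα1 : α < 1)
    (v v' v'' : ℝ → ℂ)
    (hd1 : ∀ x ∈ Ioc (0:ℝ) 1, HasDerivWithinAt v (v' x) (Ioc (0:ℝ) 1) x)
    (hd2 : ∀ x ∈ Ioc (0:ℝ) 1, HasDerivWithinAt v' (v'' x) (Ioc (0:ℝ) 1) x)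
    (hc : ContinuousOn v'' (Ioc (0:ℝ) 1))
    (hint1 : IntegrableOn (fun x => ‖v x‖ ^ 2) (Ioc (0:ℝ) 1))
    (hint2 : IntegrableOn (fun x => x ^ α * ‖v' x‖ ^ 2) (Ioc (0:ℝ) 1))
    (hode : ∀ x ∈ Ioo (0:ℝ) 1,
      HasDerivAt (fun y : ℝ => ((y ^ α : ℝ) : ℂ) * v' y) (-(lam : ℂ) * v x) x)
    (hv0 : Tendsto v (nhdsWithin 0 (Ioi (0:ℝ))) (nhds 0))
    (hxv0 : Tendsto (fun x : ℝ => ((x ^ α : ℝ) : ℂ) * v' x)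
      (nhdsWithin 0 (Ioi (0:ℝ))) (nhds 0))
    (hbc1 : v' 1 = 0) :
    ∀ x ∈ Ioc (0:ℝ) 1, v x = 0 := by
  set w : ℝ → ℂ := fun y : ℝ => ((y ^ α : ℝ) : ℂ) * v' y with hw
  -- continuity facts
  have hcv : ContinuousOn v (Ioc (0:ℝ) 1) := fun x hx => (hd1 x hx).continuousWithinAt
  have hcv' : ContinuousOn v' (Ioc (0:ℝ) 1) := fun x hx => (hd2 x hx).continuousWithinAt
  have hcw : ContinuousOn w (Ioc (0:ℝ) 1) := by
    apply ContinuousOn.mul _ hcv'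
    exact Complex.continuous_ofReal.comp_continuousOn
      (fun s hs => (Real.continuousAt_rpow_const s α (Or.inl hs.1.ne')).continuousWithinAt)
  -- rpow continuity helper
  have hrpc : ∀ (r a b : ℝ), 0 < a → ContinuousOn (fun s : ℝ => s ^ r) (Icc a b) :=
    fun r a b ha s hs =>
      (Real.continuousAt_rpow_const s r (Or.inl (ha.trans_le hs.1).ne')).continuousWithinAt
  -- FTC for w
  have hFTCw : ∀ ε x : ℝ, 0 < ε → ε ≤ x → x ≤ 1 →
      (∫ t in ε..x, (-(lam : ℂ) * v t)) = w x - w ε := by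
    intro ε x hε hεx hx1
    have hsub : Icc ε x ⊆ Ioc (0:ℝ) 1 := fun t ht => ⟨hε.trans_le ht.1, ht.2.trans hx1⟩
    apply intervalIntegral.integral_eq_sub_of_hasDeriv_right_of_le hεx
      (hcw.mono hsub)
      (fun t ht => (hode t ⟨hε.trans ht.1, ht.2.trans_le hx1⟩).hasDerivWithinAt)
    apply ContinuousOn.intervalIntegrable
    rw [uIcc_of_le hεx]
    exact (continuousOn_const.mul (hcv.mono hsub))
  -- FTC for v
  have hFTCv : ∀ ε x : ℝ, 0 < ε → ε ≤ x → x ≤ 1 →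
      (∫ t in ε..x, v' t) = v x - v ε := by
    intro ε x hε hεx hx1
    have hsub : Icc ε x ⊆ Ioc (0:ℝ) 1 := fun t ht => ⟨hε.trans_le ht.1, ht.2.trans hx1⟩
    apply intervalIntegral.integral_eq_sub_of_hasDeriv_right_of_le hεx
      (hcv.mono hsub)
      (fun t ht => ((hd1 t ⟨hε.trans ht.1, (ht.2.trans_le hx1).le⟩).hasDerivAt
        (Ioc_mem_nhds (hε.trans ht.1) (ht.2.trans_le hx1))).hasDerivWithinAt)
    apply ContinuousOn.intervalIntegrable
    rw [uIcc_of_le hεx]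
    exact hcv'.mono hsub
  -- norm of v' in terms of w
  have hnv' : ∀ s : ℝ, 0 < s → ‖v' s‖ = s ^ (-α) * ‖w s‖ := by
    intro s hs
    have h1 : ‖w s‖ = s ^ α * ‖v' s‖ := by
      simp [hw, norm_mul, abs_of_pos (Real.rpow_pos_of_pos hs α)]
    rw [h1, Real.rpow_neg hs.le]
    field_simp
  -- the key iteration step
  have hstep : ∀ c k : ℝ, 0 ≤ c → 0 ≤ k → (∀ t ∈ Ioc (0:ℝ) 1, ‖v t‖ ≤ c * t ^ k) →
      ∀ x ∈ Ioc (0:ℝ) 1,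
        ‖v x‖ ≤ |lam| * c / ((k + 1) * (k + 2 - α)) * x ^ (k + 2 - α) := by
    intro c k hc hk hb
    have hk1 : (0:ℝ) < k + 1 := by linarith
    have hk2 : (0:ℝ) < k + 2 - α := by linarith
    -- first, bound w
    have hwb : ∀ t ∈ Ioc (0:ℝ) 1, ‖w t‖ ≤ |lam| * c / (k + 1) * t ^ (k + 1) := by
      intro t ht
      set B : ℝ := |lam| * c / (k + 1) * t ^ (k + 1) with hB
      have hlim : Tendsto (fun ε : ℝ => ‖w ε‖ + B) (nhdsWithin 0 (Ioi (0:ℝ)))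
          (nhds (‖(0:ℂ)‖ + B)) := hxv0.norm.add_const B
      rw [norm_zero, zero_add] at hlim
      refine ge_of_tendsto hlim ?_
      filter_upwards [Ioo_mem_nhdsGT_of_mem (Set.left_mem_Ico.mpr ht.1)] with ε hε
      have hεt : ε ≤ t := hε.2.le
      have hε0 : 0 < ε := hε.1
      have hFTC := hFTCw ε t hε0 hεt ht.2
      have hib : IntervalIntegrable (fun s : ℝ => |lam| * c * s ^ k) volume ε t := by
        apply ContinuousOn.intervalIntegrable
        rw [uIcc_of_le hεt]
        exact continuousOn_const.mul (hrpc k ε t hε0)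
      have hnormle : ‖∫ s in ε..t, (-(lam : ℂ) * v s)‖ ≤
          |∫ s in ε..t, |lam| * c * s ^ k| := by
        apply intervalIntegral.norm_integral_le_abs_of_norm_le _ hib
        apply ae_restrict_of_forall_mem measurableSet_uIoc
        intro s hs
        rw [uIoc_of_le hεt] at hs
        have hs01 : s ∈ Ioc (0:ℝ) 1 := ⟨hε0.trans hs.1, hs.2.trans ht.2⟩
        have := hb s hs01
        calc ‖-(lam : ℂ) * v s‖ = |lam| * ‖v s‖ := by
              simp [norm_mul]
          _ ≤ |lam| * (c * s ^ k) := by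
              exact mul_le_mul_of_nonneg_left this (abs_nonneg _)
          _ = |lam| * c * s ^ k := by ring
      have hval : (∫ s in ε..t, |lam| * c * s ^ k) =
          |lam| * c * ((t ^ (k + 1) - ε ^ (k + 1)) / (k + 1)) := by
        rw [intervalIntegral.integral_const_mul, integral_rpow (Or.inl (by linarith))]
      have hmono : ε ^ (k + 1) ≤ t ^ (k + 1) :=
        Real.rpow_le_rpow hε0.le hεt hk1.le
      have hintle : (∫ s in ε..t, |lam| * c * s ^ k) ≤ B := by
        rw [hval, hB]
        have h1 : (t ^ (k + 1) - ε ^ (k + 1)) / (k + 1) ≤ t ^ (k + 1) / (k + 1) := by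
          apply div_le_div_of_nonneg_right _ hk1.le
          have := Real.rpow_nonneg hε0.le (k + 1)
          linarith
        calc |lam| * c * ((t ^ (k + 1) - ε ^ (k + 1)) / (k + 1))
            ≤ |lam| * c * (t ^ (k + 1) / (k + 1)) :=
              mul_le_mul_of_nonneg_left h1 (by positivity)
          _ = |lam| * c / (k + 1) * t ^ (k + 1) := by ring
      have hintnonneg : (0:ℝ) ≤ ∫ s in ε..t, |lam| * c * s ^ k := by
        rw [hval]
        have := Real.rpow_nonneg hε0.le (k + 1)
        have h2 : (0:ℝ) ≤ (t ^ (k + 1) - ε ^ (k + 1)) / (k + 1) := by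
          apply div_nonneg _ hk1.le; linarith
        positivity
      calc ‖w t‖ = ‖w ε + (w t - w ε)‖ := by ring_nf
        _ ≤ ‖w ε‖ + ‖w t - w ε‖ := norm_add_le _ _
        _ ≤ ‖w ε‖ + B := by
            apply add_le_add le_rfl
            rw [← hFTC]
            exact hnormle.trans (by rwa [_root_.abs_of_nonneg hintnonneg])
    -- now bound v
    intro x hx
    set D : ℝ := |lam| * c / (k + 1) with hD
    have hD0 : 0 ≤ D := by positivity
    set B : ℝ := |lam| * c / ((k + 1) * (k + 2 - α)) * x ^ (k + 2 - α) with hB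
    have hlim : Tendsto (fun ε : ℝ => ‖v ε‖ + B) (nhdsWithin 0 (Ioi (0:ℝ)))
        (nhds (‖(0:ℂ)‖ + B)) := hv0.norm.add_const B
    rw [norm_zero, zero_add] at hlim
    refine ge_of_tendsto hlim ?_
    filter_upwards [Ioo_mem_nhdsGT_of_mem (Set.left_mem_Ico.mpr hx.1)] with ε hε
    have hεx : ε ≤ x := hε.2.le
    have hε0 : 0 < ε := hε.1
    have hFTC := hFTCv ε x hε0 hεx hx.2
    have hib : IntervalIntegrable (fun s : ℝ => D * s ^ (k + 1 - α)) volume ε x := by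
      apply ContinuousOn.intervalIntegrable
      rw [uIcc_of_le hεx]
      exact continuousOn_const.mul (hrpc (k + 1 - α) ε x hε0)
    have hnormle : ‖∫ s in ε..x, v' s‖ ≤ |∫ s in ε..x, D * s ^ (k + 1 - α)| := by
      apply intervalIntegral.norm_integral_le_abs_of_norm_le _ hib
      apply ae_restrict_of_forall_mem measurableSet_uIoc
      intro s hs
      rw [uIoc_of_le hεx] at hs
      have hs0 : 0 < s := hε0.trans hs.1
      have hs01 : s ∈ Ioc (0:ℝ) 1 := ⟨hs0, hs.2.trans hx.2⟩
      have h1 := hwb s hs01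
      calc ‖v' s‖ = s ^ (-α) * ‖w s‖ := hnv' s hs0
        _ ≤ s ^ (-α) * (D * s ^ (k + 1)) :=
            mul_le_mul_of_nonneg_left h1 (Real.rpow_nonneg hs0.le _)
        _ = D * (s ^ (-α) * s ^ (k + 1)) := by ring
        _ = D * s ^ (k + 1 - α) := by
            rw [← Real.rpow_add hs0]; ring_nf
    have hval : (∫ s in ε..x, D * s ^ (k + 1 - α)) =
        D * ((x ^ (k + 2 - α) - ε ^ (k + 2 - α)) / (k + 2 - α)) := by
      rw [intervalIntegral.integral_const_mul, integral_rpow (Or.inl (by linarith)),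
        show k + 1 - α + 1 = k + 2 - α by ring]
    have hmono : ε ^ (k + 2 - α) ≤ x ^ (k + 2 - α) :=
      Real.rpow_le_rpow hε0.le hεx hk2.le
    have hintle : (∫ s in ε..x, D * s ^ (k + 1 - α)) ≤ B := by
      rw [hval, hB, hD]
      have h1 : (x ^ (k + 2 - α) - ε ^ (k + 2 - α)) / (k + 2 - α) ≤
          x ^ (k + 2 - α) / (k + 2 - α) := by
        apply div_le_div_of_nonneg_right _ hk2.le
        have := Real.rpow_nonneg hε0.le (k + 2 - α)
        linarith
      calc |lam| * c / (k + 1) * ((x ^ (k + 2 - α) - ε ^ (k + 2 - α)) / (k + 2 - α))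
          ≤ |lam| * c / (k + 1) * (x ^ (k + 2 - α) / (k + 2 - α)) :=
            mul_le_mul_of_nonneg_left h1 (by positivity)
        _ = |lam| * c / ((k + 1) * (k + 2 - α)) * x ^ (k + 2 - α) := by
            field_simp
    have hintnonneg : (0:ℝ) ≤ ∫ s in ε..x, D * s ^ (k + 1 - α) := by
      rw [hval]
      have := Real.rpow_nonneg hε0.le (k + 2 - α)
      have h2 : (0:ℝ) ≤ (x ^ (k + 2 - α) - ε ^ (k + 2 - α)) / (k + 2 - α) := by
        apply div_nonneg _ hk2.le; linarith
      positivity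
    calc ‖v x‖ = ‖v ε + (v x - v ε)‖ := by ring_nf
      _ ≤ ‖v ε‖ + ‖v x - v ε‖ := norm_add_le _ _
      _ ≤ ‖v ε‖ + B := by
          apply add_le_add le_rfl
          rw [← hFTC]
          exact hnormle.trans (by rwa [_root_.abs_of_nonneg hintnonneg])
  -- global bound M on ‖v‖
  obtain ⟨M, hM0, hM1, hMb⟩ : ∃ M : ℝ, 0 ≤ M ∧ 1 ≤ M ∧ ∀ t ∈ Ioc (0:ℝ) 1, ‖v t‖ ≤ M := by
    have h1 : ∀ᶠ t in nhdsWithin 0 (Ioi (0:ℝ)), ‖v t‖ ≤ 1 := by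
      have := hv0.norm
      rw [norm_zero] at this
      exact this.eventually (eventually_le_nhds zero_lt_one)
    rw [eventually_nhdsWithin_iff] at h1
    obtain ⟨δ, hδ, hδ'⟩ := Metric.eventually_nhds_iff.1 h1
    set a : ℝ := min δ 1 / 2 with ha
    have ha0 : 0 < a := by positivity
    have ha1 : a ≤ 1 := by
      have : min δ 1 ≤ 1 := min_le_right _ _
      simp only [ha]; linarith
    obtain ⟨C, hC⟩ := (isCompact_Icc (a := a) (b := 1)).exists_bound_of_continuousOn
      (hcv.mono (fun t ht => ⟨ha0.trans_le ht.1, ht.2⟩))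
    refine ⟨max C 1, le_trans zero_le_one (le_max_right _ _), le_max_right _ _, ?_⟩
    intro t ht
    rcases lt_or_ge t a with h | h
    · have htδ : dist t 0 < δ := by
        rw [Real.dist_eq, sub_zero, abs_of_pos ht.1]
        have h2 : min δ 1 ≤ δ := min_le_left _ _
        simp only [ha] at h
        linarith
      exact le_trans (hδ' htδ ht.1) (le_max_right _ _)
    · exact le_trans (hC t ⟨h, ht.2⟩) (le_max_left _ _)
  -- the sequences
  set K : ℕ → ℝ := fun n => n * (2 - α) with hK
  set C : ℕ → ℝ := fun n => Nat.rec M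
    (fun n cn => |lam| * cn / ((K n + 1) * (K n + 2 - α))) n with hC
  have hKnonneg : ∀ n : ℕ, 0 ≤ K n := by
    intro n; simp only [hK]
    have := Nat.cast_nonneg (α := ℝ) n
    nlinarith
  have hKn : ∀ n : ℕ, (n : ℝ) ≤ K n := by
    intro n
    simp only [hK]
    nlinarith [Nat.cast_nonneg (α := ℝ) n]
  have hCsucc : ∀ n, C (n + 1) = |lam| * C n / ((K n + 1) * (K n + 2 - α)) := fun n => rfl
  have hCnonneg : ∀ n, 0 ≤ C n := by
    intro n
    induction n with
    | zero => exact hM0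
    | succ n ih =>
      rw [hCsucc]
      have h1 : 0 < K n + 1 := by linarith [hKnonneg n]
      have h2 : 0 < K n + 2 - α := by linarith [hKnonneg n]
      positivity
  -- the main induction
  have hmain : ∀ n, ∀ t ∈ Ioc (0:ℝ) 1, ‖v t‖ ≤ C n * t ^ (K n) := by
    intro n
    induction n with
    | zero =>
      intro t ht
      have : K 0 = 0 := by simp [hK]
      rw [this, Real.rpow_zero, mul_one]
      exact hMb t ht
    | succ n ih =>
      intro t ht
      have h := hstep (C n) (K n) (hCnonneg n) (hKnonneg n) ih t ht
      rw [hCsucc]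
      have hKeq : K (n + 1) = K n + 2 - α := by
        simp only [hK]; push_cast; ring
      rw [hKeq]
      exact h
  -- bound on C n
  have hCbound : ∀ n, C n ≤ M * |lam| ^ n / n.factorial := by
    intro n
    induction n with
    | zero => simp [hC]
    | succ n ih =>
      rw [hCsucc]
      have h1 : (n : ℝ) + 1 ≤ (K n + 1) * (K n + 2 - α) := by
        have h2 := hKn n
        have h3 := hKnonneg n
        nlinarith
      have h4 : (0:ℝ) < (n : ℝ) + 1 := by positivity
      have hCn := hCnonneg n
      have hf : ((n.factorial : ℝ)) ≠ 0 := Nat.cast_ne_zero.mpr n.factorial_pos.ne'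
      calc |lam| * C n / ((K n + 1) * (K n + 2 - α))
          ≤ |lam| * C n / ((n : ℝ) + 1) :=
            div_le_div_of_nonneg_left (by positivity) h4 h1
        _ ≤ |lam| * (M * |lam| ^ n / n.factorial) / ((n : ℝ) + 1) := by gcongr
        _ = M * |lam| ^ (n + 1) / (n + 1).factorial := by
            rw [Nat.factorial_succ]
            push_cast
            field_simp
            ring
  -- conclusion
  intro x hx
  have hlim : Tendsto (fun n : ℕ => M * (|lam| ^ n / n.factorial)) atTop (nhds (M * 0)) :=
    (FloorSemiring.tendsto_pow_div_factorial_atTop |lam|).const_mul M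
  rw [mul_zero] at hlim
  have hle : ∀ n : ℕ, ‖v x‖ ≤ M * (|lam| ^ n / n.factorial) := by
    intro n
    have h1 := hmain n x hx
    have h2 : x ^ K n ≤ 1 := Real.rpow_le_one hx.1.le hx.2 (hKnonneg n)
    have h3 : ‖v x‖ ≤ C n := by
      refine h1.trans ?_
      nlinarith [hCnonneg n, Real.rpow_nonneg hx.1.le (K n)]
    calc ‖v x‖ ≤ C n := h3
      _ ≤ M * |lam| ^ n / n.factorial := hCbound n
      _ = M * (|lam| ^ n / n.factorial) := by ring
  have hfin : ‖v x‖ ≤ 0 := ge_of_tendsto hlim (Eventually.of_forall hle)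
  exact norm_le_zero_iff.mp hfin
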